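/- For every integer n ≥ 0 and every integer k, the poly-Bernoulli number with level 2 satisfies 𝔅_{2n}^{(k)} = Σ_{m=0}^{n} (1/(2m+1)^k) Σ_{i_1+⋯+i_{2m} = n−m, i_1,…,i_{2m} ≥ 0} (−1/4)^{n−m} · (2n)! / ((2i_1+1)! ⋯ (2i_{2m}+1)!), where for m = 0 the inner sum (over 0-tuples) equals 1 if n = 0 and 0 otherwise. -/

import Mathlib

/-- Stirling numbers of the second kind with level `s`. -/
def stirling2Lev (s : ℕ) : ℕ → ℕ → ℕ
  | 0, 0 => 1
  | 0, _ + 1 => 0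
  | _ + 1, 0 => 0
  | n + 1, k + 1 => stirling2Lev s n k + (k + 1) ^ s * stirling2Lev s n (k + 1)

/-- Poly-Bernoulli numbers with level `2`. -/
def polyBernoulliLev2 (n : ℕ) (k : ℤ) : ℚ :=
  ∑ m ∈ Finset.range (n + 1),
    (stirling2Lev 2 n m : ℚ) * (-1) ^ (n - m) * (Nat.factorial (2 * m) : ℚ)
      / ((2 * m + 1 : ℚ)) ^ k

open PowerSeries Finset


noncomputable def sh : PowerSeries ℚ := PowerSeries.mk fun n => if Odd n then 1 / n.factorial else 0
noncomputable def ch : PowerSeries ℚ := PowerSeries.mk fun n => if Even n then 1 / n.factorial else 0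

lemma deriv_sh : d⁄dX ℚ sh = ch := by
  ext n
  rw [PowerSeries.coeff_derivative]
  simp only [sh, ch, coeff_mk]
  rcases Nat.even_or_odd n with h | h
  · rw [if_pos (Even.add_one h), if_pos h, Nat.factorial_succ]
    have h1 : ((n.factorial : ℚ)) ≠ 0 := Nat.cast_ne_zero.mpr n.factorial_ne_zero
    have h2 : ((n : ℚ) + 1) ≠ 0 := by positivity
    push_cast
    field_simp
  · rw [if_neg (Nat.not_odd_iff_even.mpr h.add_one), if_neg (Nat.not_even_iff_odd.mpr h), zero_mul]

lemma deriv_ch : d⁄dX ℚ ch = sh := by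
  ext n
  rw [PowerSeries.coeff_derivative]
  simp only [sh, ch, coeff_mk]
  rcases Nat.even_or_odd n with h | h
  · rw [if_neg (Nat.not_even_iff_odd.mpr h.add_one), if_neg (Nat.not_odd_iff_even.mpr h), zero_mul]
  · rw [if_pos h.add_one, if_pos h, Nat.factorial_succ]
    have h1 : ((n.factorial : ℚ)) ≠ 0 := Nat.cast_ne_zero.mpr n.factorial_ne_zero
    push_cast
    field_simp

lemma altsum (n : ℕ) :
    ∑ i ∈ range (n+1), ((-1 : ℚ))^i * (n.choose i : ℚ) = if n = 0 then 1 else 0 := by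
  have h := Int.alternating_sum_range_choose (n := n)
  have := congrArg (Int.cast : ℤ → ℚ) h
  push_cast at this
  convert this using 2

lemma inv_fac_eq (n i : ℕ) (h : i ≤ n) :
    (1 : ℚ) / (i.factorial * (n - i).factorial) = (n.choose i : ℚ) / n.factorial := by
  have hfac : (n.choose i : ℚ) * (i.factorial * (n - i).factorial) = n.factorial := by
    exact_mod_cast congrArg (Nat.cast : ℕ → ℚ)
      (by rw [← mul_assoc]; exact Nat.choose_mul_factorial_mul_factorial h)
  have h1 : ((i.factorial : ℚ) * (n - i).factorial) ≠ 0 := by positivity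
  have h2 : ((n.factorial : ℚ)) ≠ 0 := Nat.cast_ne_zero.mpr n.factorial_ne_zero
  field_simp
  linarith [hfac]

lemma ch_sq : ch * ch = 1 + sh * sh := by
  ext n
  rw [map_add, PowerSeries.coeff_mul, PowerSeries.coeff_mul,
    Finset.Nat.sum_antidiagonal_eq_sum_range_succ_mk,
    Finset.Nat.sum_antidiagonal_eq_sum_range_succ_mk, PowerSeries.coeff_one]
  simp only [sh, ch, coeff_mk]
  have key : (∑ i ∈ range (n+1), ((if Even i then (1:ℚ)/i.factorial else 0) *
        (if Even (n-i) then (1:ℚ)/(n-i).factorial else 0)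
      - (if Odd i then (1:ℚ)/i.factorial else 0) *
        (if Odd (n-i) then (1:ℚ)/(n-i).factorial else 0)))
      = if n = 0 then 1 else 0 := by
    rcases Nat.even_or_odd n with hn | hn
    · have hterm : ∀ i ∈ range (n+1),
          ((if Even i then (1:ℚ)/i.factorial else 0) *
            (if Even (n-i) then (1:ℚ)/(n-i).factorial else 0)
          - (if Odd i then (1:ℚ)/i.factorial else 0) *
            (if Odd (n-i) then (1:ℚ)/(n-i).factorial else 0))
          = ((-1:ℚ))^i * (n.choose i : ℚ) / n.factorial := by
        intro i hi
        have hin : i ≤ n := by simpa using Nat.lt_succ_iff.mp (mem_range.mp hi)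
        have hfe : (1 : ℚ) / (i.factorial * (n - i).factorial)
            = (n.choose i : ℚ) / n.factorial := inv_fac_eq n i hin
        rcases Nat.even_or_odd i with hie | hio
        · have hnie : Even (n - i) := (Nat.even_sub hin).mpr (by simp [hn, hie])
          rw [if_pos hie, if_pos hnie, if_neg (Nat.not_odd_iff_even.mpr hie),
            if_neg (Nat.not_odd_iff_even.mpr hnie), hie.neg_one_pow]
          rw [zero_mul, sub_zero, div_mul_div_comm, one_mul, hfe, one_mul]
        · have hnio : Odd (n - i) := by
            rcases Nat.even_or_odd (n - i) with he | ho
            · exfalso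
              have := (Nat.even_sub hin).mp he
              simp [hn, Nat.not_even_iff_odd.mpr hio] at this
            · exact ho
          rw [if_neg (Nat.not_even_iff_odd.mpr hio), if_neg (Nat.not_even_iff_odd.mpr hnio),
            if_pos hio, if_pos hnio, hio.neg_one_pow]
          rw [zero_mul, zero_sub, div_mul_div_comm, one_mul, hfe]
          ring
      rw [Finset.sum_congr rfl hterm]
      have : ∑ i ∈ range (n+1), ((-1:ℚ))^i * (n.choose i : ℚ) / n.factorial
          = (∑ i ∈ range (n+1), ((-1:ℚ))^i * (n.choose i : ℚ)) / n.factorial := by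
        rw [Finset.sum_div]
      rw [this, altsum]
      split
      · next h => subst h; simp
      · simp
    · have hn0 : n ≠ 0 := by rintro rfl; simp at hn
      rw [if_neg hn0]
      apply Finset.sum_eq_zero
      intro i hi
      have hin : i ≤ n := by simpa using Nat.lt_succ_iff.mp (mem_range.mp hi)
      rcases Nat.even_or_odd i with hie | hio
      · have hnio : Odd (n - i) := by
          rcases Nat.even_or_odd (n - i) with he | ho
          · exfalso
            have := (Nat.even_sub hin).mp he
            simp [Nat.not_even_iff_odd.mpr hn, hie] at this
          · exact ho
        rw [if_neg (Nat.not_even_iff_odd.mpr hnio), if_neg (Nat.not_odd_iff_even.mpr hie)]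
        ring
      · have hnie : Even (n - i) := (Nat.even_sub hin).mpr
          (by simp [Nat.not_even_iff_odd.mpr hn, Nat.not_even_iff_odd.mpr hio])
        rw [if_neg (Nat.not_even_iff_odd.mpr hio), if_neg (Nat.not_odd_iff_even.mpr hnie)]
        ring
  rw [Finset.sum_sub_distrib] at key
  rw [show n.succ = n + 1 from rfl]
  linarith [key]

lemma key (m : ℕ) :
    d⁄dX ℚ (d⁄dX ℚ (sh ^ (2*m+2))) =
      ((2*m+2)*(2*m+1)) • sh ^ (2*m) + ((2*m+2)*(2*m+2)) • sh ^ (2*m+2) := by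
  rw [Derivation.leibniz_pow, deriv_sh, show 2*m+2-1 = 2*m+1 by omega,
    map_nsmul, smul_eq_mul, Derivation.leibniz, deriv_ch, Derivation.leibniz_pow, deriv_sh,
    show 2*m+1-1 = 2*m by omega]
  simp only [smul_eq_mul, nsmul_eq_mul]
  push_cast
  linear_combination ((2*(m:ℚ⟦X⟧)+2) * (2*m+1) * sh^(2*m)) * ch_sq

lemma keyc (n m : ℕ) :
    ((2*n+2) : ℚ) * ((2*n+1) : ℚ) * coeff (R := ℚ) (2*n+2) (sh ^ (2*m+2)) =
      ((2*m+2) : ℚ) * ((2*m+1) : ℚ) * coeff (R := ℚ) (2*n) (sh ^ (2*m))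
      + ((2*m+2) : ℚ) * ((2*m+2) : ℚ) * coeff (R := ℚ) (2*n) (sh ^ (2*m+2)) := by
  have h := congrArg (coeff (R := ℚ) (2*n)) (key m)
  rw [PowerSeries.coeff_derivative, PowerSeries.coeff_derivative, map_add, map_nsmul, map_nsmul] at h
  simp only [nsmul_eq_mul] at h
  push_cast at h ⊢
  rw [show 2*n+1+1 = 2*n+2 by omega] at h
  linarith [h]

lemma stirling2Lev_eq_zero (s : ℕ) : ∀ n k : ℕ, n < k → stirling2Lev s n k = 0 := by
  intro n
  induction n with
  | zero => rintro (_ | k) h; · omega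
            rfl
  | succ n ih =>
    rintro (_ | k) h
    · omega
    · show stirling2Lev s n k + (k + 1) ^ s * stirling2Lev s n (k + 1) = 0
      rw [ih k (by omega), ih (k+1) (by omega)]
      ring

lemma constantCoeff_sh : constantCoeff (R := ℚ) sh = 0 := by
  rw [← PowerSeries.coeff_zero_eq_constantCoeff]
  simp [sh]

lemma coeff_sh_pow_eq_zero {N j : ℕ} (h : N < j) : coeff (R := ℚ) N (sh ^ j) = 0 := by
  have hd : (X : ℚ⟦X⟧) ^ j ∣ sh ^ j :=
    pow_dvd_pow_of_dvd (PowerSeries.X_dvd_iff.mpr constantCoeff_sh) j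
  exact PowerSeries.X_pow_dvd_iff.mp hd N h

lemma main (n : ℕ) : ∀ m : ℕ, ((2*n).factorial : ℚ) * coeff (R := ℚ) (2*n) (sh ^ (2*m)) =
    4^(n-m) * stirling2Lev 2 n m * ((2*m).factorial : ℚ) := by
  induction n with
  | zero =>
    rintro (_ | m)
    · simp [stirling2Lev]
    · rw [stirling2Lev_eq_zero 2 0 (m+1) (by omega)]
      rw [show (0:ℕ) - (m+1) = 0 by omega]
      rw [coeff_sh_pow_eq_zero (by omega)]
      simp
  | succ n ih =>
    rintro (_ | m)
    · simp [stirling2Lev, PowerSeries.coeff_one]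
    · rcases Nat.lt_or_ge n m with hmn | hmn
      · -- m ≥ n+1 : both sides vanish
        rw [stirling2Lev_eq_zero 2 (n+1) (m+1) (by omega),
          coeff_sh_pow_eq_zero (by omega)]
        simp
      · -- m ≤ n
        have hk := keyc n m
        have ihm := ih m
        have ihm1 := ih (m+1)
        have hS : (stirling2Lev 2 (n+1) (m+1) : ℚ)
            = stirling2Lev 2 n m + ((m:ℚ)+1)^2 * stirling2Lev 2 n (m+1) := by
          show ((stirling2Lev 2 n m + (m + 1) ^ 2 * stirling2Lev 2 n (m+1) : ℕ) : ℚ) = _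
          push_cast
          ring
        have hfac1 : ((2*n+2).factorial : ℚ)
            = (2*n+2) * ((2*n+1) * (2*n).factorial) := by
          rw [show 2*n+2 = (2*n+1)+1 by omega, Nat.factorial_succ, Nat.factorial_succ]
          push_cast
          ring
        have hfac2 : ((2*m+2).factorial : ℚ)
            = (2*m+2) * ((2*m+1) * (2*m).factorial) := by
          rw [show 2*m+2 = (2*m+1)+1 by omega, Nat.factorial_succ, Nat.factorial_succ]
          push_cast
          ring
        rw [show 2*(n+1) = 2*n+2 by omega, show 2*(m+1) = 2*m+2 by omega]
        rw [show n+1-(m+1) = n-m by omega, hfac1, hfac2, hS]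
        rw [show 2*(m+1) = 2*m+2 by omega] at ihm1
        rcases Nat.lt_or_ge m n with hlt | hge
        · have hpow : (4:ℚ)^(n-m) = 4 * 4^(n-(m+1)) := by
            rw [show n-m = (n-(m+1))+1 by omega, pow_succ]
            ring
          rw [hpow] at ihm ⊢
          linear_combination (((2*n).factorial : ℚ)) * hk
            + (2*(m:ℚ)+2)*(2*(m:ℚ)+1) * ihm
            + (2*(m:ℚ)+2)*(2*(m:ℚ)+2) * ihm1
            + (2*(m:ℚ)+2)*(2*(m:ℚ)+2) * ((4:ℚ)^(n-(m+1))) * ((stirling2Lev 2 n (m+1) : ℕ) : ℚ) * hfac2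
        · -- m = n
          have hmeq : m = n := by omega
          subst hmeq
          rw [stirling2Lev_eq_zero 2 m (m+1) (by omega)] at ihm1 ⊢
          rw [show m-m = 0 by omega] at ihm ⊢
          rw [show m-(m+1) = 0 by omega] at ihm1
          push_cast at ihm1 ⊢
          linear_combination (((2*m).factorial : ℚ)) * hk
            + (2*(m:ℚ)+2)*(2*(m:ℚ)+1) * ihm
            + (2*(m:ℚ)+2)*(2*(m:ℚ)+2) * ihm1

noncomputable def toF (k : ℕ) (x : Fin k → ℕ) : ℕ →₀ ℕ :=
  Finsupp.onFinset (Finset.range k) (fun i => if h : i < k then 2 * x ⟨i, h⟩ + 1 else 0)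
    (fun i hi => by rw [Finset.mem_range]; by_contra hc; exact hi (dif_neg hc))

lemma toF_apply (k : ℕ) (x : Fin k → ℕ) (i : ℕ) :
    toF k x i = if h : i < k then 2 * x ⟨i, h⟩ + 1 else 0 := rfl

lemma toF_apply_fin (k : ℕ) (x : Fin k → ℕ) (t : Fin k) : toF k x (t : ℕ) = 2 * x t + 1 := by
  rw [toF_apply, dif_pos t.isLt]

lemma bridge (k M : ℕ) :
    coeff (R := ℚ) (2*M + k) (sh ^ k) =
      ∑ x ∈ Finset.Nat.antidiagonalTuple k M, ∏ t : Fin k, (1:ℚ) / (2 * x t + 1).factorial := by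
  classical
  rw [PowerSeries.coeff_pow]
  simp only [sh, coeff_mk]
  rw [← Finset.sum_filter_add_sum_filter_not (finsuppAntidiag (range k) (2*M+k))
    (fun l => ∀ i ∈ range k, Odd (l i))]
  have hzero : ∑ l ∈ (finsuppAntidiag (range k) (2*M+k)).filter
      (fun l => ¬ ∀ i ∈ range k, Odd (l i)),
      ∏ i ∈ range k, (if Odd (l i) then (1:ℚ)/(l i).factorial else 0) = 0 := by
    apply Finset.sum_eq_zero
    intro l hl
    rw [mem_filter] at hl
    push_neg at hl
    obtain ⟨i, hi, hodd⟩ := hl.2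
    exact Finset.prod_eq_zero hi (if_neg hodd)
  rw [hzero, add_zero]
  refine Finset.sum_nbij' (fun l => fun t : Fin k => l t / 2) (fun x => toF k x)
    ?_ ?_ ?_ ?_ ?_
  · -- maps into antidiagonalTuple
    intro l hl
    rw [mem_filter, mem_finsuppAntidiag] at hl
    obtain ⟨⟨hsum, hsupp⟩, hodd⟩ := hl
    rw [Finset.Nat.mem_antidiagonalTuple]
    have hs : ∑ t : Fin k, (l : ℕ → ℕ) (t : ℕ) = 2*M + k := by
      rw [Fin.sum_univ_eq_sum_range (fun i => (l : ℕ → ℕ) i) k]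
      exact hsum
    have hall : ∀ t : Fin k, (l : ℕ → ℕ) (t : ℕ) = 2 * ((l : ℕ → ℕ) (t : ℕ) / 2) + 1 := by
      intro t
      have := hodd t (mem_range.mpr t.isLt)
      rw [Nat.odd_iff] at this
      omega
    have h2 : ∑ t : Fin k, (2 * ((l : ℕ → ℕ) (t : ℕ) / 2) + 1) = 2*M + k := by
      rw [← hs]; exact Finset.sum_congr rfl (fun t _ => (hall t).symm)
    rw [Finset.sum_add_distrib, ← Finset.mul_sum, Finset.sum_const, card_univ,
      Fintype.card_fin, smul_eq_mul, mul_one] at h2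
    show ∑ t : Fin k, (l : ℕ → ℕ) (t : ℕ) / 2 = M
    omega
  · -- reverse map into filter set
    intro x hx
    rw [Finset.Nat.mem_antidiagonalTuple] at hx
    rw [mem_filter, mem_finsuppAntidiag]
    refine ⟨⟨?_, fun i hi => by
      rw [Finsupp.mem_support_iff, toF_apply] at hi
      rw [mem_range]
      by_contra hc
      exact hi (dif_neg hc)⟩, ?_⟩
    · have h1 : ∑ i ∈ range k, toF k x i
          = ∑ i ∈ range k, (fun i => if h : i < k then 2 * x ⟨i, h⟩ + 1 else 0) i :=
        Finset.sum_congr rfl (fun i _ => rfl)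
      show ∑ i ∈ range k, toF k x i = 2*M + k
      rw [h1, ← Fin.sum_univ_eq_sum_range (fun i => if h : i < k then 2 * x ⟨i, h⟩ + 1 else 0) k]
      have h3 : ∀ t : Fin k, (if h : (t:ℕ) < k then 2 * x ⟨(t:ℕ), h⟩ + 1 else 0) = 2 * x t + 1 := by
        intro t; rw [dif_pos t.isLt]
      rw [Finset.sum_congr rfl (fun t _ => h3 t), Finset.sum_add_distrib, ← Finset.mul_sum,
        hx, Finset.sum_const, card_univ, Fintype.card_fin, smul_eq_mul, mul_one]
    · intro i hi
      rw [mem_range] at hi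
      rw [toF_apply, dif_pos hi]
      exact ⟨x ⟨i, hi⟩, by ring⟩
  · -- left inverse
    intro l hl
    rw [mem_filter, mem_finsuppAntidiag] at hl
    obtain ⟨⟨hsum, hsupp⟩, hodd⟩ := hl
    ext i
    rw [toF_apply]
    by_cases hik : i < k
    · rw [dif_pos hik]
      have := hodd i (mem_range.mpr hik)
      rw [Nat.odd_iff] at this
      show 2 * ((l : ℕ → ℕ) i / 2) + 1 = (l : ℕ → ℕ) i
      omega
    · rw [dif_neg hik]
      by_contra hc
      have hmem : i ∈ l.support := Finsupp.mem_support_iff.mpr (fun h => hc h.symm)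
      have := hsupp hmem
      rw [mem_range] at this
      omega
  · -- right inverse
    intro x hx
    funext t
    show toF k x (t : ℕ) / 2 = x t
    rw [toF_apply_fin]
    omega
  · -- values agree
    intro l hl
    rw [mem_filter, mem_finsuppAntidiag] at hl
    obtain ⟨⟨hsum, hsupp⟩, hodd⟩ := hl
    rw [← Fin.prod_univ_eq_prod_range
      (fun i => if Odd ((l : ℕ → ℕ) i) then (1:ℚ)/((l : ℕ → ℕ) i).factorial else 0) k]
    apply Finset.prod_congr rfl
    intro t _
    have ho := hodd t (mem_range.mpr t.isLt)
    show (if Odd ((l : ℕ → ℕ) (t:ℕ)) then (1:ℚ)/((l : ℕ → ℕ) (t:ℕ)).factorial else 0)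
      = (1:ℚ) / (2 * ((l : ℕ → ℕ) (t:ℕ) / 2) + 1).factorial
    rw [if_pos ho]
    rw [Nat.odd_iff] at ho
    have he : 2 * ((l : ℕ → ℕ) (t:ℕ) / 2) + 1 = (l : ℕ → ℕ) (t:ℕ) := by omega
    rw [he]

/-- Explicit multinomial formula:
`𝔅_{2n}^{(k)} = Σ_{m=0}^n (2m+1)^{-k} Σ_{i₁+⋯+i_{2m}=n−m} (−1/4)^{n−m} (2n)!/((2i₁+1)!⋯(2i_{2m}+1)!)`,
the inner sum being over tuples of `2m` nonnegative integers summing to `n−m`. -/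
theorem stmt_7 (n : ℕ) (k : ℤ) :
    polyBernoulliLev2 n k =
      ∑ m ∈ Finset.range (n + 1), (1 / ((2 * m + 1 : ℚ)) ^ k) *
        ∑ i ∈ Finset.Nat.antidiagonalTuple (2 * m) (n - m),
          (-(1 / 4) : ℚ) ^ (n - m) * (Nat.factorial (2 * n) : ℚ)
            / ∏ t : Fin (2 * m), (Nat.factorial (2 * i t + 1) : ℚ) := by
  unfold polyBernoulliLev2
  apply Finset.sum_congr rfl
  intro m hm
  have hmn : m ≤ n := by
    have := Finset.mem_range.mp hm; omega
  have hbridge := bridge (2*m) (n - m)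
  rw [show 2*(n-m) + 2*m = 2*n by omega] at hbridge
  have hmain := main n m
  have h4 : ((1:ℚ)/4)^(n-m) * (4:ℚ)^(n-m) = 1 := by
    rw [← mul_pow]; norm_num
  have h5 : ((1:ℚ)/4)^(n-m) * (((2*n).factorial:ℚ) * coeff (R := ℚ) (2*n) (sh^(2*m)))
      = (stirling2Lev 2 n m : ℚ) * ((2*m).factorial : ℚ) := by
    rw [hmain]
    calc ((1:ℚ)/4)^(n-m) * ((4:ℚ)^(n-m) * (stirling2Lev 2 n m : ℚ) * ((2*m).factorial : ℚ))
        = (((1:ℚ)/4)^(n-m) * (4:ℚ)^(n-m)) * ((stirling2Lev 2 n m : ℚ) * ((2*m).factorial : ℚ)) := by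
          ring
      _ = (stirling2Lev 2 n m : ℚ) * ((2*m).factorial : ℚ) := by rw [h4, one_mul]
  have hinner : ∑ i ∈ Finset.Nat.antidiagonalTuple (2*m) (n-m),
      (-(1/4) : ℚ) ^ (n-m) * ((2*n).factorial : ℚ)
        / ∏ t : Fin (2*m), ((2 * i t + 1).factorial : ℚ)
      = (-1 : ℚ)^(n-m) * (stirling2Lev 2 n m : ℚ) * ((2*m).factorial : ℚ) := by
    have h1 : ∀ i ∈ Finset.Nat.antidiagonalTuple (2*m) (n-m),
        (-(1/4) : ℚ) ^ (n-m) * ((2*n).factorial : ℚ)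
          / ∏ t : Fin (2*m), ((2 * i t + 1).factorial : ℚ)
        = ((-1:ℚ)^(n-m) * ((1:ℚ)/4)^(n-m) * ((2*n).factorial : ℚ))
          * ∏ t : Fin (2*m), (1:ℚ)/((2 * i t + 1).factorial : ℚ) := by
      intro i _
      rw [show (-(1/4) : ℚ) = (-1) * (1/4) by norm_num, mul_pow, div_eq_mul_inv,
        ← Finset.prod_inv_distrib]
      simp only [one_div]
      try ring
    rw [Finset.sum_congr rfl h1, ← Finset.mul_sum, ← hbridge]
    linear_combination ((-1:ℚ))^(n-m) * h5
  rw [hinner, div_eq_mul_inv, one_div]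
  ring
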